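/- Let s,t be odd integers with t ≡ 1 (mod 4). Then ν₂({n}_{s,t}) = 0 if 3 ∤ n, and for n = 3k, ν₂({3k}) = 1 if k is odd, and ν₂({3k}) = ν₂(k·{6}) - 1 if k is even. -/
import Mathlib


/-- Generalized Fibonacci polynomials: {0}=0, {1}=1, {n}=s{n-1}+t{n-2}. -/
def gfib {R : Type*} [CommRing R] (s t : R) : ℕ → R
  | 0 => 0
  | 1 => 1
  | n + 2 => s * gfib s t (n + 1) + t * gfib s t n

/-- Generalized Lucas polynomials: ⟨0⟩=2, ⟨1⟩=s, ⟨n⟩=s⟨n-1⟩+t⟨n-2⟩. -/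
def gluc {R : Type*} [CommRing R] (s t : R) : ℕ → R
  | 0 => 2
  | 1 => s
  | n + 2 => s * gluc s t (n + 1) + t * gluc s t n

section Identities
variable {R : Type*} [CommRing R] (s t : R)

lemma gfib_two_step (n : ℕ) : gfib s t (n+2) = s * gfib s t (n+1) + t * gfib s t n := rfl
lemma gluc_two_step (n : ℕ) : gluc s t (n+2) = s * gluc s t (n+1) + t * gluc s t n := rfl

lemma map_gfib {S : Type*} [CommRing S] (φ : R →+* S) : ∀ n, φ (gfib s t n) = gfib (φ s) (φ t) n := by
  intro n
  induction n using Nat.twoStepInduction with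
  | zero => simp [gfib]
  | one => simp [gfib]
  | more n ih1 ih2 => simp [gfib_two_step, ih1, ih2]

lemma map_gluc {S : Type*} [CommRing S] (φ : R →+* S) : ∀ n, φ (gluc s t n) = gluc (φ s) (φ t) n := by
  intro n
  induction n using Nat.twoStepInduction with
  | zero => simp [gluc, map_ofNat]
  | one => simp [gluc]
  | more n ih1 ih2 => simp [gluc_two_step, ih1, ih2]


lemma gluc_eq_gfib : ∀ n, gluc s t n = 2 * gfib s t (n+1) - s * gfib s t n := by
  intro n
  induction n using Nat.twoStepInduction with
  | zero => simp [gfib, gluc]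
  | one =>
    have e : gfib s t (1+1) = s * gfib s t 1 + t * gfib s t 0 := rfl
    rw [e]; simp [gfib, gluc]; ring
  | more n ih1 ih2 =>
    have e1 : gfib s t (n+2+1) = s * gfib s t (n+1+1) + t * gfib s t (n+1) := rfl
    have e2 : gfib s t (n+1+1) = s * gfib s t (n+1) + t * gfib s t n := rfl
    rw [gluc_two_step, ih1, ih2, e1, e2]; ring

lemma gfib_add (m : ℕ) : ∀ n, gfib s t (m+n+1) =
    gfib s t (m+1) * gfib s t (n+1) + t * gfib s t m * gfib s t n := by
  intro n
  induction n using Nat.twoStepInduction with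
  | zero => simp [gfib]
  | one =>
    have e1 : gfib s t (m+1+1) = s * gfib s t (m+1) + t * gfib s t m := rfl
    have e2 : gfib s t (1+1) = s * gfib s t 1 + t * gfib s t 0 := rfl
    rw [e1, e2]; simp [gfib]; ring
  | more n ih1 ih2 =>
    have e1 : gfib s t (m+(n+2)+1) = s * gfib s t (m+(n+1)+1) + t * gfib s t (m+n+1) := rfl
    have e2 : gfib s t (n+2+1) = s * gfib s t (n+1+1) + t * gfib s t (n+1) := rfl
    have e3 : gfib s t (n+2) = s * gfib s t (n+1) + t * gfib s t n := rfl
    rw [e1, ih1, ih2, e2, e3]; ring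

lemma gfib_cassini : ∀ n, gfib s t (n+1)^2 - s * gfib s t (n+1) * gfib s t n
    - t * gfib s t n ^ 2 = (-t)^n := by
  intro n
  induction n with
  | zero => simp [gfib]
  | succ n ih =>
    have e : gfib s t (n+1+1) = s * gfib s t (n+1) + t * gfib s t n := rfl
    rw [e, pow_succ]
    linear_combination (-t) * ih

lemma gfib_two_mul (n : ℕ) : gfib s t (2*n) = gfib s t n * gluc s t n := by
  cases n with
  | zero => simp [gfib, gluc]
  | succ n =>
    have h : 2*(n+1) = n+(n+1)+1 := by ring
    have e : gfib s t (n+1+1) = s * gfib s t (n+1) + t * gfib s t n := rfl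
    rw [h, gfib_add, gluc_eq_gfib, e]; ring

lemma gluc_two_mul (n : ℕ) : gluc s t (2*n) = gluc s t n ^ 2 - 2 * (-t)^n := by
  have h : 2*n+1 = n+n+1 := by ring
  rw [gluc_eq_gfib, h, gfib_add, gfib_two_mul, gluc_eq_gfib]
  linear_combination (-2 : R) * gfib_cassini s t n

lemma gfib_add_double (m : ℕ) : ∀ n, gfib s t (n + 2*m) =
    gluc s t m * gfib s t (n+m) - (-t)^m * gfib s t n := by
  intro n
  induction n using Nat.twoStepInduction with
  | zero =>
    simp only [Nat.zero_add, gfib]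
    rw [gfib_two_mul]; ring
  | one =>
    have h : 1 + 2*m = m+m+1 := by ring
    have h2 : 1 + m = m + 1 := by ring
    rw [h, h2, gfib_add, gluc_eq_gfib]
    have : gfib s t 1 = 1 := rfl
    rw [this]
    linear_combination (-1 : R) * gfib_cassini s t m
  | more n ih1 ih2 =>
    have e1 : gfib s t (n+2+2*m) = s * gfib s t (n+1+2*m) + t * gfib s t (n+2*m) := by
      have h : n+2+2*m = (n+2*m)+1+1 := by ring
      have h1 : n+1+2*m = (n+2*m)+1 := by ring
      rw [h, h1]; rfl
    have e2 : gfib s t (n+2+m) = s * gfib s t (n+1+m) + t * gfib s t (n+m) := by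
      have h : n+2+m = (n+m)+1+1 := by ring
      have h1 : n+1+m = (n+m)+1 := by ring
      rw [h, h1]; rfl
    have e3 : gfib s t (n+2) = s * gfib s t (n+1) + t * gfib s t n := rfl
    rw [e1, ih1, ih2, e2, e3]; ring

lemma gluc_add_double (m n : ℕ) : gluc s t (n + 2*m) =
    gluc s t m * gluc s t (n+m) - (-t)^m * gluc s t n := by
  have h : n + 2*m + 1 = (n+1) + 2*m := by ring
  have h2 : n + 1 + m = n + m + 1 := by ring
  rw [gluc_eq_gfib, h, gfib_add_double, gfib_add_double, gluc_eq_gfib s t (n+m),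
    gluc_eq_gfib s t n, h2]
  ring

lemma gluc_nine : gluc s t 9 = gluc s t 3 * (gluc s t 6 + t^3) := by
  have h : (9:ℕ) = 3 + 2*3 := by norm_num
  have h6 : (3:ℕ) + 3 = 6 := by norm_num
  rw [h, gluc_add_double, h6]; ring

end Identities

section Mods

lemma z2_gfib_period : ∀ n, gfib (1 : ZMod 2) 1 (n+3) = gfib 1 1 n := by
  intro n
  induction n using Nat.twoStepInduction with
  | zero => decide
  | one => decide
  | more n ih1 ih2 =>
    have e1 : gfib (1 : ZMod 2) 1 (n+2+3) = 1 * gfib 1 1 (n+1+3) + 1 * gfib 1 1 (n+3) := rfl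
    have e2 : gfib (1 : ZMod 2) 1 (n+2) = 1 * gfib 1 1 (n+1) + 1 * gfib 1 1 n := rfl
    rw [e1, ih1, ih2, e2]

lemma z2_gluc_period : ∀ n, gluc (1 : ZMod 2) 1 (n+3) = gluc 1 1 n := by
  intro n
  induction n using Nat.twoStepInduction with
  | zero => decide
  | one => decide
  | more n ih1 ih2 =>
    have e1 : gluc (1 : ZMod 2) 1 (n+2+3) = 1 * gluc 1 1 (n+1+3) + 1 * gluc 1 1 (n+3) := rfl
    have e2 : gluc (1 : ZMod 2) 1 (n+2) = 1 * gluc 1 1 (n+1) + 1 * gluc 1 1 n := rfl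
    rw [e1, ih1, ih2, e2]

lemma z2_gfib_fold : ∀ q r, gfib (1 : ZMod 2) 1 (3*q+r) = gfib 1 1 r := by
  intro q
  induction q with
  | zero => simp
  | succ q ih =>
    intro r
    have h : 3*(q+1)+r = (3*q+r)+3 := by ring
    rw [h, z2_gfib_period, ih]

lemma z2_gluc_fold : ∀ q r, gluc (1 : ZMod 2) 1 (3*q+r) = gluc 1 1 r := by
  intro q
  induction q with
  | zero => simp
  | succ q ih =>
    intro r
    have h : 3*(q+1)+r = (3*q+r)+3 := by ring
    rw [h, z2_gluc_period, ih]

lemma z2_gfib_val (n : ℕ) (h : ¬ 3 ∣ n) : gfib (1 : ZMod 2) 1 n = 1 := by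
  have hd : n = 3*(n/3) + n % 3 := (Nat.div_add_mod n 3).symm
  have hr : n % 3 = 1 ∨ n % 3 = 2 := by omega
  rw [hd, z2_gfib_fold]
  rcases hr with h | h <;> rw [h] <;> decide

lemma z2_gluc_val (n : ℕ) (h : 3 ∣ n) : gluc (1 : ZMod 2) 1 n = 0 := by
  obtain ⟨q, rfl⟩ := h
  have : 3 * q = 3 * q + 0 := rfl
  rw [this, z2_gluc_fold]
  decide

lemma z4_gfib_period (σ : ZMod 4) (hσ : σ = 1 ∨ σ = 3) :
    ∀ n, gfib σ 1 (n+6) = gfib σ 1 n := by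
  intro n
  induction n using Nat.twoStepInduction with
  | zero => rcases hσ with h | h <;> subst h <;> decide
  | one => rcases hσ with h | h <;> subst h <;> decide
  | more n ih1 ih2 =>
    have e1 : gfib σ 1 (n+2+6) = σ * gfib σ 1 (n+1+6) + 1 * gfib σ 1 (n+6) := rfl
    have e2 : gfib σ 1 (n+2) = σ * gfib σ 1 (n+1) + 1 * gfib σ 1 n := rfl
    rw [e1, ih1, ih2, e2]

lemma z4_gfib_fold (σ : ZMod 4) (hσ : σ = 1 ∨ σ = 3) :
    ∀ q r, gfib σ 1 (6*q+r) = gfib σ 1 r := by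
  intro q
  induction q with
  | zero => simp
  | succ q ih =>
    intro r
    have h : 6*(q+1)+r = (6*q+r)+6 := by ring
    rw [h, z4_gfib_period σ hσ, ih]

lemma z4_gfib_three (σ : ZMod 4) (hσ : σ = 1 ∨ σ = 3) (q : ℕ) :
    gfib σ 1 (6*q+3) = 2 := by
  rw [z4_gfib_fold σ hσ]
  rcases hσ with h | h <;> subst h <;> decide

end Mods

section Cast

lemma zmod_eq_of_dvd (m : ℕ) (x c : ℤ) (h : (m:ℤ) ∣ x - c) : (x : ZMod m) = (c : ZMod m) := by
  have h2 := (ZMod.intCast_zmod_eq_zero_iff_dvd (x-c) m).2 h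
  push_cast at h2
  rwa [sub_eq_zero] at h2

lemma dvd_of_zmod_eq (m : ℕ) (x c : ℤ) (h : (x : ZMod m) = (c : ZMod m)) : (m:ℤ) ∣ x - c := by
  apply (ZMod.intCast_zmod_eq_zero_iff_dvd (x-c) m).1
  push_cast [h]
  ring

end Cast

section Val

lemma val2_of_mod4 (x : ℤ) (h : x % 4 = 2) : x ≠ 0 ∧ padicValInt 2 x = 1 := by
  haveI : Fact (Nat.Prime 2) := ⟨Nat.prime_two⟩
  obtain ⟨q, hq⟩ : ∃ q, x = 2*(2*q+1) := ⟨x/4, by omega⟩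
  refine ⟨by omega, ?_⟩
  rw [hq, padicValInt.mul two_ne_zero (by omega)]
  have h1 : padicValInt 2 (2:ℤ) = 1 := by
    rw [show ((2:ℤ)) = ((2:ℕ):ℤ) by norm_num]
    exact padicValInt_self
  have h2 : padicValInt 2 (2*q+1) = 0 := by
    apply padicValInt.eq_zero_of_not_dvd
    push_cast
    omega
  omega

lemma val2_odd (x : ℤ) (h : x % 2 = 1) : padicValInt 2 x = 0 := by
  apply padicValInt.eq_zero_of_not_dvd
  push_cast
  omega

end Val


section Main
variable (s t : ℤ)

lemma cast2_gfib (hs2 : s % 2 = 1) (ht2 : t % 2 = 1) (n : ℕ) :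
    ((gfib s t n : ℤ) : ZMod 2) = gfib 1 1 n := by
  have hcs : ((s:ℤ) : ZMod 2) = ((1:ℤ) : ZMod 2) := zmod_eq_of_dvd 2 s 1 (by push_cast; omega)
  have hct : ((t:ℤ) : ZMod 2) = ((1:ℤ) : ZMod 2) := zmod_eq_of_dvd 2 t 1 (by push_cast; omega)
  have hm := map_gfib s t (Int.castRingHom (ZMod 2)) n
  simp only [Int.coe_castRingHom] at hm
  rw [hm, hcs, hct]
  norm_num

lemma cast2_gluc (hs2 : s % 2 = 1) (ht2 : t % 2 = 1) (n : ℕ) :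
    ((gluc s t n : ℤ) : ZMod 2) = gluc 1 1 n := by
  have hcs : ((s:ℤ) : ZMod 2) = ((1:ℤ) : ZMod 2) := zmod_eq_of_dvd 2 s 1 (by push_cast; omega)
  have hct : ((t:ℤ) : ZMod 2) = ((1:ℤ) : ZMod 2) := zmod_eq_of_dvd 2 t 1 (by push_cast; omega)
  have hm := map_gluc s t (Int.castRingHom (ZMod 2)) n
  simp only [Int.coe_castRingHom] at hm
  rw [hm, hcs, hct]
  norm_num

lemma gfib_odd (hs2 : s % 2 = 1) (ht2 : t % 2 = 1) (n : ℕ) (h : ¬ 3 ∣ n) :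
    gfib s t n % 2 = 1 := by
  have h1 : ((gfib s t n : ℤ) : ZMod 2) = ((1:ℤ) : ZMod 2) := by
    rw [cast2_gfib s t hs2 ht2, z2_gfib_val n h]; norm_num
  have h2 := dvd_of_zmod_eq 2 _ 1 h1
  push_cast at h2
  omega

lemma gluc_even (hs2 : s % 2 = 1) (ht2 : t % 2 = 1) (n : ℕ) (h : 3 ∣ n) :
    gluc s t n % 2 = 0 := by
  have h1 : ((gluc s t n : ℤ) : ZMod 2) = ((0:ℤ) : ZMod 2) := by
    rw [cast2_gluc s t hs2 ht2, z2_gluc_val n h]; norm_num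
  have h2 := dvd_of_zmod_eq 2 _ 0 h1
  push_cast at h2
  omega

lemma gfib_mod4 (hs2 : s % 2 = 1) (ht4 : t % 4 = 1) (a : ℕ) :
    gfib s t (6*a+3) % 4 = 2 := by
  have hσ : ((s:ℤ) : ZMod 4) = 1 ∨ ((s:ℤ) : ZMod 4) = 3 := by
    have : s % 4 = 1 ∨ s % 4 = 3 := by omega
    rcases this with h | h
    · left
      have := zmod_eq_of_dvd 4 s 1 (by push_cast; omega)
      rw [this]; norm_num
    · right
      have := zmod_eq_of_dvd 4 s 3 (by push_cast; omega)
      rw [this]; norm_num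
  have hct : ((t:ℤ) : ZMod 4) = 1 := by
    have := zmod_eq_of_dvd 4 t 1 (by push_cast; omega)
    rw [this]; norm_num
  have hm := map_gfib s t (Int.castRingHom (ZMod 4)) (6*a+3)
  simp only [Int.coe_castRingHom] at hm
  have h1 : ((gfib s t (6*a+3) : ℤ) : ZMod 4) = ((2:ℤ) : ZMod 4) := by
    rw [hm, hct, z4_gfib_three _ hσ a]; norm_num
  have h2 := dvd_of_zmod_eq 4 _ 2 h1
  push_cast at h2
  omega

lemma gluc_three_mul_odd (hs2 : s % 2 = 1) (ht2 : t % 2 = 1) :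
    ∀ i, ∃ c : ℤ, c % 2 = 1 ∧ gluc s t (3*(2*i+1)) = gluc s t 3 * c := by
  intro i
  induction i using Nat.twoStepInduction with
  | zero => exact ⟨1, by norm_num, by norm_num⟩
  | one =>
    refine ⟨gluc s t 6 + t^3, ?_, ?_⟩
    · have h6 : gluc s t 6 % 2 = 0 := gluc_even s t hs2 ht2 6 (by norm_num)
      have h3 : Odd (t^3) := (Int.odd_iff.2 ht2).pow
      rw [Int.odd_iff] at h3
      omega
    · rw [show 3*(2*1+1) = 9 by norm_num]
      exact gluc_nine s t
  | more i ih1 ih2 =>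
    obtain ⟨c1, hc1, he1⟩ := ih1
    obtain ⟨c2, hc2, he2⟩ := ih2
    refine ⟨gluc s t 6 * c2 - t^6 * c1, ?_, ?_⟩
    · have h6 : gluc s t 6 % 2 = 0 := gluc_even s t hs2 ht2 6 (by norm_num)
      obtain ⟨g, hg⟩ : (2:ℤ) ∣ gluc s t 6 := by omega
      have h3 : Odd (t^6) := (Int.odd_iff.2 ht2).pow
      rw [Int.odd_iff] at h3
      obtain ⟨u, hu⟩ : ∃ u, t^6 = 2*u+1 := ⟨t^6/2, by omega⟩
      obtain ⟨v, hv⟩ : ∃ v, c1 = 2*v+1 := ⟨c1/2, by omega⟩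
      have : gluc s t 6 * c2 - t^6 * c1 = 2*(g*c2 - 2*u*v - u - v) - 1 := by
        rw [hg, hu, hv]; ring
      omega
    · have hidx : 3*(2*(i+2)+1) = 3*(2*i+1) + 2*6 := by ring
      rw [hidx, gluc_add_double, show 3*(2*i+1)+6 = 3*(2*(i+1)+1) by ring, he1, he2,
        show ((-t)^6 : ℤ) = t^6 by ring]
      ring

lemma gluc_6a_mod4 (hs2 : s % 2 = 1) (ht2 : t % 2 = 1) (a : ℕ) (ha : 1 ≤ a) :
    gluc s t (6*a) % 4 = 2 := by
  have h : gluc s t (6*a) = gluc s t (3*a) ^ 2 - 2 * (-t)^(3*a) := by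
    rw [show 6*a = 2*(3*a) by ring, gluc_two_mul]
  have hL : gluc s t (3*a) % 2 = 0 := gluc_even s t hs2 ht2 (3*a) ⟨a, rfl⟩
  obtain ⟨b, hb⟩ : (2:ℤ) ∣ gluc s t (3*a) := by omega
  have hodd : Odd ((-t)^(3*a)) := by
    apply Odd.pow
    rw [Int.odd_iff]; omega
  rw [Int.odd_iff] at hodd
  obtain ⟨c, hc⟩ : ∃ c, (-t)^(3*a) = 2*c+1 := ⟨(-t)^(3*a)/2, by omega⟩
  have h2 : gluc s t (6*a) = 4*(b^2 - c) - 2 := by rw [h, hb, hc]; ring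
  omega

lemma gfib_six_zero (h : gfib s t 6 = 0) : ∀ j, gfib s t (6*j) = 0 := by
  intro j
  induction j using Nat.twoStepInduction with
  | zero => simp [gfib]
  | one => simpa using h
  | more j ih1 ih2 =>
    have hidx : 6*(j+2) = 6*j + 2*6 := by ring
    rw [hidx, gfib_add_double, show 6*j+6 = 6*(j+1) by ring, ih1, ih2]
    ring

lemma even_val (hs2 : s % 2 = 1) (ht4 : t % 4 = 1) (hF6 : gfib s t 6 ≠ 0) :
    ∀ j, 1 ≤ j → gfib s t (6*j) ≠ 0 ∧
      padicValInt 2 (gfib s t (6*j)) = padicValNat 2 j + padicValInt 2 (gfib s t 6) := by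
  haveI : Fact (Nat.Prime 2) := ⟨Nat.prime_two⟩
  have ht2 : t % 2 = 1 := by omega
  intro j
  induction j using Nat.strong_induction_on with
  | _ j IH =>
  intro hj
  rcases Nat.even_or_odd j with hje | hjo
  · obtain ⟨a, ha⟩ := hje
    have ha' : j = 2*a := by omega
    have ha1 : 1 ≤ a := by omega
    have hL := gluc_6a_mod4 s t hs2 ht2 a ha1
    obtain ⟨hLne, hLval⟩ := val2_of_mod4 _ hL
    have hsplit : gfib s t (6*j) = gfib s t (6*a) * gluc s t (6*a) := by
      rw [ha', show 6*(2*a) = 2*(6*a) by ring, gfib_two_mul]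
    obtain ⟨hne, hval⟩ := IH a (by omega) ha1
    refine ⟨by rw [hsplit]; exact mul_ne_zero hne hLne, ?_⟩
    rw [hsplit, padicValInt.mul hne hLne, hval, hLval, ha',
      padicValNat.mul (p := 2) two_ne_zero (by omega), padicValNat.self one_lt_two]
    ring
  · obtain ⟨a, ha⟩ := hjo
    have hF3j : gfib s t (3*j) % 4 = 2 := by
      rw [show 3*j = 6*a+3 by omega]
      exact gfib_mod4 s t hs2 ht4 a
    obtain ⟨hF3ne, hF3val⟩ := val2_of_mod4 _ hF3j
    obtain ⟨c, hc, hce⟩ := gluc_three_mul_odd s t hs2 ht2 a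
    have hLj : gluc s t (3*j) = gluc s t 3 * c := by rw [ha]; exact hce
    have hF6split : gfib s t 6 = gfib s t 3 * gluc s t 3 := by
      rw [show (6:ℕ) = 2*3 by norm_num, gfib_two_mul]
    have hL3ne : gluc s t 3 ≠ 0 := by
      intro h0
      apply hF6
      rw [hF6split, h0, mul_zero]
    have hcne : c ≠ 0 := by omega
    have hF3 : gfib s t 3 % 4 = 2 := by
      have := gfib_mod4 s t hs2 ht4 0
      simpa using this
    obtain ⟨hF3ne', hF3val'⟩ := val2_of_mod4 _ hF3
    have hF6val : padicValInt 2 (gfib s t 6) = 1 + padicValInt 2 (gluc s t 3) := by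
      rw [hF6split, padicValInt.mul hF3ne' hL3ne, hF3val']
    have hsplit : gfib s t (6*j) = gfib s t (3*j) * gluc s t (3*j) := by
      rw [show 6*j = 2*(3*j) by ring, gfib_two_mul]
    have hLjne : gluc s t (3*j) ≠ 0 := by
      rw [hLj]; exact mul_ne_zero hL3ne hcne
    refine ⟨by rw [hsplit]; exact mul_ne_zero hF3ne hLjne, ?_⟩
    rw [hsplit, padicValInt.mul hF3ne hLjne, hF3val, hLj,
      padicValInt.mul hL3ne hcne, val2_odd c hc, hF6val,
      padicValNat.eq_zero_of_not_dvd (by omega : ¬ 2 ∣ j)]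
    ring

end Main

theorem stmt12 (s t : ℤ) (hs : Odd s) (ht : t % 4 = 1) :
    (∀ n : ℕ, ¬ (3 ∣ n) → padicValInt 2 (gfib s t n) = 0) ∧
    (∀ k : ℕ, 1 ≤ k →
      (Odd k → padicValInt 2 (gfib s t (3 * k)) = 1) ∧
      (Even k → padicValInt 2 (gfib s t (3 * k)) = padicValInt 2 ((k : ℤ) * gfib s t 6) - 1)) := by
  haveI : Fact (Nat.Prime 2) := ⟨Nat.prime_two⟩
  have hs2 : s % 2 = 1 := Int.odd_iff.1 hs
  have ht2 : t % 2 = 1 := by omega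
  constructor
  · intro n h3
    exact val2_odd _ (gfib_odd s t hs2 ht2 n h3)
  · intro k hk
    constructor
    · intro hodd
      obtain ⟨a, ha⟩ := hodd
      have h : gfib s t (3*k) % 4 = 2 := by
        rw [show 3*k = 6*a+3 by omega]
        exact gfib_mod4 s t hs2 ht a
      exact (val2_of_mod4 _ h).2
    · intro heven
      obtain ⟨j, hj⟩ := heven
      have hj' : k = 2*j := by omega
      have hj1 : 1 ≤ j := by omega
      by_cases hF6 : gfib s t 6 = 0
      · rw [show 3*k = 6*j by omega, gfib_six_zero s t hF6 j, hF6, mul_zero]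
        simp
      · obtain ⟨hne, hval⟩ := even_val s t hs2 ht hF6 j hj1
        have hkne : (k : ℤ) ≠ 0 := by positivity
        rw [show 3*k = 6*j by omega, hval,
          padicValInt.mul hkne hF6, padicValInt.of_nat, hj',
          padicValNat.mul (p := 2) two_ne_zero (by omega), padicValNat.self one_lt_two]
        omega
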